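/- Let G act cocompactly by covering (deck) transformations on a connected locally finite simplicial complex X̃. Then the number of topological ends of X̃ depends only on G, not on the complex X̃ or the action. -/

import Mathlib

open SimpleGraph CategoryTheory Opposite

namespace EndsInv

variable {V W : Type*}

/-- Ball of radius `n` around `x` (via walks). -/
def gball (Δ : SimpleGraph W) (x : W) (n : ℕ) : Set W :=
  {y | ∃ p : Δ.Walk x y, p.length ≤ n}

lemma mem_gball_self (Δ : SimpleGraph W) (x : W) (n : ℕ) : x ∈ gball Δ x n :=
  ⟨Walk.nil, by simp⟩

lemma mem_gball_of_dist {Δ : SimpleGraph W} (hc : Δ.Connected) {x y : W} {n : ℕ}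
    (h : Δ.dist x y ≤ n) : y ∈ gball Δ x n := by
  obtain ⟨p, hp⟩ := hc.exists_walk_length_eq_dist x y
  exact ⟨p, hp ▸ h⟩

lemma mem_gball_reverse {Δ : SimpleGraph W} {x y : W} {n : ℕ} (h : y ∈ gball Δ x n) :
    x ∈ gball Δ y n := by
  obtain ⟨p, hp⟩ := h
  exact ⟨p.reverse, by simpa using hp⟩

lemma gball_finite (Δ : SimpleGraph W) (hlf : Δ.LocallyFinite) (n : ℕ) :
    ∀ x : W, (gball Δ x n).Finite := by
  induction n with
  | zero =>
    intro x
    apply Set.Finite.subset (Set.finite_singleton x)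
    rintro y ⟨p, hp⟩
    exact (Walk.eq_of_length_eq_zero (Nat.le_zero.mp hp)).symm
  | succ n ih =>
    intro x
    have : gball Δ x (n+1) ⊆ {x} ∪ ⋃ u ∈ Δ.neighborSet x, gball Δ u n := by
      rintro y ⟨p, hp⟩
      cases p with
      | nil => exact Or.inl rfl
      | @cons _ u _ ha q =>
        refine Or.inr (Set.mem_biUnion (ha : u ∈ Δ.neighborSet x) ?_)
        exact ⟨q, by simpa using Nat.succ_le_succ_iff.mp (by simpa using hp)⟩
    refine Set.Finite.subset ((Set.finite_singleton x).union ?_) this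
    have hfin : (Δ.neighborSet x).Finite := by haveI := hlf x; exact (Δ.neighborSet x).toFinite
    exact hfin.biUnion fun u _ => ih u

/-- Vertices of a walk all avoiding a set give equal `componentCompl`s. -/
lemma mk_eq_of_walk {Γ : SimpleGraph V} {K : Set V} :
    ∀ {a b : V} (p : Γ.Walk a b) (_ : ∀ u ∈ p.support, u ∉ K)
      (ha : a ∉ K) (hb : b ∉ K),
      Γ.componentComplMk ha = Γ.componentComplMk hb := by
  intro a b p
  induction p with
  | nil => intro _ ha hb; rfl
  | @cons a c b h q ih =>
    intro hsup ha hb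
    have hc : c ∉ K := hsup c (by simp)
    exact (Γ.componentComplMk_eq_of_adj ha hc h).trans
      (ih (fun u hu => hsup u (by simp [hu])) hc hb)



section MapEnds

variable {Γ : SimpleGraph V} {Δ : SimpleGraph W} {f : V → W} {C : ℕ}

/-- The `C`-neighborhood of a finite set. -/
def nhd (Δ : SimpleGraph W) (C : ℕ) (L : Finset W) : Set W :=
  ⋃ x ∈ (L : Set W), gball Δ x C

lemma nhd_finite (hlf : Δ.LocallyFinite) (L : Finset W) : (nhd Δ C L).Finite :=
  L.finite_toSet.biUnion fun x _ => gball_finite Δ hlf C x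

lemma subset_nhd (L : Finset W) : (L : Set W) ⊆ nhd Δ C L :=
  fun x hx => Set.mem_biUnion hx (mem_gball_self Δ x C)

/-- Pullback of a finite set: vertices mapping `C`-close to `L`. -/
noncomputable def pull (Δ : SimpleGraph W) (f : V → W) (C : ℕ) (hΔlf : Δ.LocallyFinite)
    (hprop : ∀ s : Set W, s.Finite → (f ⁻¹' s).Finite) (L : Finset W) : Finset V :=
  (hprop (nhd Δ C L) (nhd_finite hΔlf L)).toFinset

variable (hΔc : Δ.Connected) (hΔlf : Δ.LocallyFinite)
  (hlip : ∀ ⦃v w : V⦄, Γ.Adj v w → Δ.dist (f v) (f w) ≤ C)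
  (hprop : ∀ s : Set W, s.Finite → (f ⁻¹' s).Finite)

lemma mem_pull {L : Finset W} {v : V} :
    v ∈ pull Δ f C hΔlf hprop L ↔ f v ∈ nhd Δ C L := by
  simp [pull]

lemma fnot_mem_of_not_mem_pull {L : Finset W} {v : V}
    (h : v ∉ (pull Δ f C hΔlf hprop L : Set V)) : f v ∉ (L : Set W) :=
  fun hf => h ((mem_pull hΔlf hprop).mpr (subset_nhd L hf))

include hΔc hlip in
lemma mk_eq_mk_of_adj {L : Finset W} {v w : V}
    (hv : v ∉ (pull Δ f C hΔlf hprop L : Set V))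
    (hw : w ∉ (pull Δ f C hΔlf hprop L : Set V)) (a : Γ.Adj v w) :
    Δ.componentComplMk (fnot_mem_of_not_mem_pull hΔlf hprop hv) =
      Δ.componentComplMk (fnot_mem_of_not_mem_pull hΔlf hprop hw) := by
  classical
  obtain ⟨p, hp⟩ := hΔc.exists_walk_length_eq_dist (f v) (f w)
  have hplen : p.length ≤ C := hp ▸ hlip a
  refine mk_eq_of_walk p (fun u hu => fun huL => ?_) _ _
  have : f v ∈ gball Δ u C :=
    mem_gball_reverse ⟨p.takeUntil u hu, (p.length_takeUntil_le hu).trans hplen⟩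
  exact hv ((mem_pull hΔlf hprop).mpr (Set.mem_biUnion huL this))

/-- Map on component complements induced by `f`. -/
noncomputable def mapCC (L : Finset W) :
    Γ.ComponentCompl ↑(pull Δ f C hΔlf hprop L) → Δ.ComponentCompl ↑L :=
  ComponentCompl.lift (fun v hv => Δ.componentComplMk (fnot_mem_of_not_mem_pull hΔlf hprop hv))
    (fun _ _ hv hw a => mk_eq_mk_of_adj hΔc hΔlf hlip hprop hv hw a)

lemma mapCC_mk {L : Finset W} {v : V} (hv : v ∉ (pull Δ f C hΔlf hprop L : Set V)) :
    mapCC hΔc hΔlf hlip hprop L (Γ.componentComplMk hv) =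
      Δ.componentComplMk (fnot_mem_of_not_mem_pull hΔlf hprop hv) := rfl

lemma pull_mono {L L' : Finset W} (h : L' ⊆ L) :
    pull Δ f C hΔlf hprop L' ⊆ pull Δ f C hΔlf hprop L := by
  intro v hv
  rw [mem_pull] at hv ⊢
  obtain ⟨s, ⟨x, rfl⟩, hs⟩ := hv
  obtain ⟨s', ⟨hx, rfl⟩, hb⟩ := hs
  exact Set.mem_biUnion (h hx) hb

/-- A representative vertex deep inside an end. -/
lemma exists_rep (e : Γ.end) (M : Finset V) :
    ∃ v : V, v ∉ (M : Set V) ∧ ∀ K : Finset V, K ⊆ M →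
      ∃ h : v ∉ (K : Set V), e.val (op K) = Γ.componentComplMk h := by
  obtain ⟨v, hv, hmk⟩ := (e.val (op M)).exists_eq_mk
  refine ⟨v, hv, fun K hK => ?_⟩
  refine ⟨fun h => hv (hK h), ?_⟩
  have := e.prop (opHomOfLE hK)
  simp only [componentComplFunctor_map] at this
  rw [← this, ← hmk]
  rfl

/-- The induced map on ends. -/
noncomputable def endMap : Γ.end → Δ.end := fun e =>
  ⟨fun Lop => mapCC hΔc hΔlf hlip hprop Lop.unop
      (e.val (op (pull Δ f C hΔlf hprop Lop.unop))), by
    rintro ⟨L⟩ ⟨L'⟩ h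
    have hLL : L' ⊆ L := le_of_op_hom h
    obtain ⟨v, hv, hrep⟩ := exists_rep e (pull Δ f C hΔlf hprop L)
    obtain ⟨h₁, e₁⟩ := hrep _ (subset_refl _)
    obtain ⟨h₂, e₂⟩ := hrep _ (pull_mono hΔlf hprop hLL)
    simp only [componentComplFunctor_map, unop_op]
    rw [e₁, e₂, mapCC_mk hΔc hΔlf hlip hprop, mapCC_mk hΔc hΔlf hlip hprop]
    rfl⟩

lemma endMap_val (e : Γ.end) {L : Finset W} {v : V}
    (hv : v ∉ (pull Δ f C hΔlf hprop L : Set V))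
    (he : e.val (op (pull Δ f C hΔlf hprop L)) = Γ.componentComplMk hv) :
    (endMap hΔc hΔlf hlip hprop e).val (op L) =
      Δ.componentComplMk (fnot_mem_of_not_mem_pull hΔlf hprop hv) := by
  have h0 : (endMap hΔc hΔlf hlip hprop e).val (op L) =
      mapCC hΔc hΔlf hlip hprop L (e.val (op (pull Δ f C hΔlf hprop L))) := rfl
  rw [h0, he, mapCC_mk hΔc hΔlf hlip hprop]

end MapEnds

section Comp

variable {Γ : SimpleGraph V} {Δ : SimpleGraph W} {f : V → W} {g : W → V} {C C' D : ℕ}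

lemma endMap_comp (hΓc : Γ.Connected) (hΓlf : Γ.LocallyFinite)
    (hΔc : Δ.Connected) (hΔlf : Δ.LocallyFinite)
    (hlipf : ∀ ⦃v w : V⦄, Γ.Adj v w → Δ.dist (f v) (f w) ≤ C)
    (hpropf : ∀ s : Set W, s.Finite → (f ⁻¹' s).Finite)
    (hlipg : ∀ ⦃v w : W⦄, Δ.Adj v w → Γ.dist (g v) (g w) ≤ C')
    (hpropg : ∀ s : Set V, s.Finite → (g ⁻¹' s).Finite)
    (hd : ∀ v : V, Γ.dist v (g (f v)) ≤ D) (e : Γ.end) :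
    endMap hΓc hΓlf hlipg hpropg (endMap hΔc hΔlf hlipf hpropf e) = e := by
  classical
  apply Subtype.ext
  funext Kop
  show (endMap hΓc hΓlf hlipg hpropg (endMap hΔc hΔlf hlipf hpropf e)).val (op Kop.unop) =
    e.val (op Kop.unop)
  set K : Finset V := Kop.unop with hK
  set L₂ : Finset W := pull Γ g C' hΓlf hpropg K with hL₂
  set K₁ : Finset V := pull Δ f C hΔlf hpropf L₂ with hK₁
  set B : Finset V := (nhd_finite (C := D) hΓlf K).toFinset with hB
  obtain ⟨v, hvM, hrep⟩ := exists_rep e (K₁ ∪ B)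
  obtain ⟨h₁, e₁⟩ := hrep K₁ Finset.subset_union_left
  have hKB : K ⊆ K₁ ∪ B := fun x hx => Finset.mem_union_right _
    (by rw [hB, Set.Finite.mem_toFinset]; exact subset_nhd K hx)
  obtain ⟨h₂, e₂⟩ := hrep K hKB
  have step1 : (endMap hΔc hΔlf hlipf hpropf e).val (op L₂) =
      Δ.componentComplMk (fnot_mem_of_not_mem_pull hΔlf hpropf h₁) :=
    endMap_val hΔc hΔlf hlipf hpropf e h₁ e₁
  have step2 : (endMap hΓc hΓlf hlipg hpropg (endMap hΔc hΔlf hlipf hpropf e)).val (op K) =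
      Γ.componentComplMk (fnot_mem_of_not_mem_pull hΓlf hpropg
        (fnot_mem_of_not_mem_pull hΔlf hpropf h₁)) :=
    endMap_val hΓc hΓlf hlipg hpropg _ (fnot_mem_of_not_mem_pull hΔlf hpropf h₁) step1
  rw [step2, e₂]
  -- now: mk (g (f v)) = mk v via a short walk avoiding K
  obtain ⟨p, hp⟩ := hΓc.exists_walk_length_eq_dist v (g (f v))
  have hplen : p.length ≤ D := hp ▸ hd v
  refine (mk_eq_of_walk p (fun u hu huK => ?_) _ _).symm
  have : v ∈ gball Γ u D :=
    mem_gball_reverse ⟨p.takeUntil u hu, (p.length_takeUntil_le hu).trans hplen⟩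
  apply hvM
  rw [Finset.coe_union, Set.mem_union]
  exact Or.inr (by rw [hB, Set.Finite.coe_toFinset]; exact Set.mem_biUnion huK this)

end Comp

section Group

variable (G : Type*) [Group G] {V W : Type*} [MulAction G V] [MulAction G W]

/-- Chosen representative of the orbit of `v`. -/
noncomputable def rep (v : V) : V :=
  (Quotient.mk'' v : MulAction.orbitRel.Quotient G V).out

lemma rep_spec (v : V) : ∃ g : G, g • rep G v = v := by
  have h : v ∈ MulAction.orbit G (rep G v) := by
    rw [rep, ← MulAction.orbitRel.Quotient.orbit_eq_orbit_out _ Quotient.out_eq']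
    exact MulAction.orbitRel.Quotient.mem_orbit.mpr rfl
  exact h

/-- Chosen group element carrying the representative to `v`. -/
noncomputable def sec (v : V) : G := (rep_spec G v).choose

lemma sec_spec (v : V) : sec G v • rep G v = v := (rep_spec G v).choose_spec

lemma rep_smul (g : G) (v : V) : rep G (g • v) = rep G v := by
  have h : (Quotient.mk'' (g • v) : MulAction.orbitRel.Quotient G V) = Quotient.mk'' v := by
    apply MulAction.orbitRel.Quotient.mem_orbit.mp
    rw [MulAction.orbitRel.Quotient.orbit_mk]
    exact MulAction.mem_orbit v g
  exact congrArg Quotient.out h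

variable {G}

lemma smul_left_cancel (hfree : ∀ (g : G) (x : V), g • x = x → g = 1)
    {g h : G} {x : V} (e : g • x = h • x) : g = h := by
  have : (h⁻¹ * g) • x = x := by rw [mul_smul, e, inv_smul_smul]
  have h2 := hfree _ _ this
  have := inv_mul_eq_one.mp h2
  exact this.symm

lemma sec_smul (hfree : ∀ (g : G) (x : V), g • x = x → g = 1) (g : G) (v : V) :
    sec G (g • v) = g * sec G v := by
  apply smul_left_cancel hfree (x := rep G v)
  rw [mul_smul, sec_spec]
  have := sec_spec G (g • v)
  rwa [rep_smul] at this

/-- The coarse map between the two spaces induced by the group. -/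
noncomputable def gmap (b : W) (v : V) : W := sec G v • b

/-- Distance is invariant under graph automorphisms coming from the action. -/
lemma dist_smul_le (Γ : SimpleGraph V) (hc : Γ.Connected)
    (haut : ∀ (g : G) (x y : V), Γ.Adj x y → Γ.Adj (g • x) (g • y)) (g : G) (x y : V) :
    Γ.dist (g • x) (g • y) ≤ Γ.dist x y := by
  obtain ⟨p, hp⟩ := hc.exists_walk_length_eq_dist x y
  have := SimpleGraph.dist_le (p.map ⟨fun z => g • z, fun {a b} h => haut g a b h⟩)
  rwa [Walk.length_map, hp] at this

lemma dist_smul_eq (Γ : SimpleGraph V) (hc : Γ.Connected)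
    (haut : ∀ (g : G) (x y : V), Γ.Adj x y → Γ.Adj (g • x) (g • y)) (g : G) (x y : V) :
    Γ.dist (g • x) (g • y) = Γ.dist x y := by
  refine le_antisymm (dist_smul_le Γ hc haut g x y) ?_
  have := dist_smul_le Γ hc haut g⁻¹ (g • x) (g • y)
  rwa [inv_smul_smul, inv_smul_smul] at this

/-- `gmap` is Lipschitz. -/
lemma gmap_lip (Γ : SimpleGraph V) (Δ : SimpleGraph W) (hΔc : Δ.Connected)
    (hΓlf : Γ.LocallyFinite)
    (hautV : ∀ (g : G) (x y : V), Γ.Adj x y → Γ.Adj (g • x) (g • y))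
    (hautW : ∀ (g : G) (x y : W), Δ.Adj x y → Δ.Adj (g • x) (g • y))
    (hfreeV : ∀ (g : G) (x : V), g • x = x → g = 1)
    [Finite (MulAction.orbitRel.Quotient G V)] (b : W) :
    ∃ C : ℕ, ∀ ⦃v w : V⦄, Γ.Adj v w → Δ.dist (gmap (G := G) b v) (gmap (G := G) b w) ≤ C := by
  classical
  set Q := MulAction.orbitRel.Quotient G V
  have hS : ∀ q q' : Q, {k : G | Γ.Adj q.out (k • q'.out)}.Finite := by
    intro q q'
    have : {k : G | Γ.Adj q.out (k • q'.out)} = (fun k : G => k • q'.out) ⁻¹' Γ.neighborSet q.out := rfl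
    rw [this]
    apply Set.Finite.preimage
    · intro a _ b _ h
      exact smul_left_cancel hfreeV h
    · haveI := hΓlf q.out
      exact (Γ.neighborSet q.out).toFinite
  have hT : (⋃ q : Q, ⋃ q' : Q, {k : G | Γ.Adj q.out (k • q'.out)}).Finite :=
    Set.finite_iUnion fun q => Set.finite_iUnion fun q' => hS q q'
  refine ⟨hT.toFinset.sup fun k => Δ.dist b (k • b), fun v w a => ?_⟩
  set k := (sec G v)⁻¹ * sec G w with hk
  have hadj : Γ.Adj (rep G v) (k • rep G w) := by
    have h1 := hautV (sec G v)⁻¹ v w a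
    have e1 : (sec G v)⁻¹ • v = rep G v := inv_smul_eq_iff.mpr (sec_spec G v).symm
    have e2 : (sec G v)⁻¹ • w = k • rep G w := by
      rw [hk, mul_smul]
      exact congrArg (fun z => (sec G v)⁻¹ • z) (sec_spec G w).symm
    rwa [e1, e2] at h1
  have hkT : k ∈ hT.toFinset := by
    rw [Set.Finite.mem_toFinset]
    exact Set.mem_iUnion.mpr ⟨Quotient.mk'' v, Set.mem_iUnion.mpr ⟨Quotient.mk'' w, hadj⟩⟩
  have hdist : Δ.dist (gmap (G := G) b v) (gmap (G := G) b w) = Δ.dist b (k • b) := by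
    have e0 := dist_smul_eq Δ hΔc hautW (sec G v)⁻¹ (sec G v • b) (sec G w • b)
    rw [inv_smul_smul, smul_smul, ← hk] at e0
    rw [gmap, gmap, ← e0]
  rw [hdist]
  exact Finset.le_sup (f := fun k : G => Δ.dist b (k • b)) hkT

/-- `gmap` is proper. -/
lemma gmap_prop (hfreeW : ∀ (g : G) (x : W), g • x = x → g = 1)
    [Finite (MulAction.orbitRel.Quotient G V)] (b : W) :
    ∀ s : Set W, s.Finite → ((gmap (G := G) b : V → W) ⁻¹' s).Finite := by
  intro s hs
  set Q := MulAction.orbitRel.Quotient G V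
  have hA : {g : G | g • b ∈ s}.Finite := by
    apply Set.Finite.preimage _ hs
    intro a _ c _ h
    exact smul_left_cancel hfreeW h
  have hR : (Set.range (fun q : Q => q.out)).Finite := Set.finite_range _
  have hinj : Function.Injective (fun v : V => (sec G v, rep G v)) := by
    intro v w h
    have h1 : sec G v = sec G w := congrArg Prod.fst h
    have h2 : rep G v = rep G w := congrArg Prod.snd h
    rw [← sec_spec G v, ← sec_spec G w, h1, h2]
  have hsub : (gmap (G := G) b : V → W) ⁻¹' s ⊆
      (fun v : V => (sec G v, rep G v)) ⁻¹' ({g : G | g • b ∈ s} ×ˢ Set.range (fun q : Q => q.out)) := by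
    intro v hv
    exact ⟨hv, ⟨Quotient.mk'' v, rfl⟩⟩
  exact Set.Finite.subset (Set.Finite.preimage hinj.injOn (hA.prod hR)) hsub

/-- Displacement bound for the composite `gmap b₁ ∘ gmap b₂`. -/
lemma gmap_disp (Γ : SimpleGraph V) (hΓc : Γ.Connected)
    (hautV : ∀ (g : G) (x y : V), Γ.Adj x y → Γ.Adj (g • x) (g • y))
    (hfreeW : ∀ (g : G) (x : W), g • x = x → g = 1)
    [Finite (MulAction.orbitRel.Quotient G V)] (b₁ : V) (b₂ : W) :
    ∃ D : ℕ, ∀ v : V, Γ.dist v (gmap (G := G) b₁ (gmap (G := G) b₂ v)) ≤ D := by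
  classical
  set Q := MulAction.orbitRel.Quotient G V
  haveI : Fintype Q := Fintype.ofFinite Q
  refine ⟨Finset.univ.sup fun q : Q => Γ.dist q.out (sec G b₂ • b₁), fun v => ?_⟩
  have hgf : gmap (G := G) b₁ (gmap (G := G) b₂ v) = sec G v • (sec G b₂ • b₁) := by
    rw [gmap, gmap, sec_smul hfreeW, mul_smul]
  have e0 := dist_smul_eq Γ hΓc hautV (sec G v) (rep G v) (sec G b₂ • b₁)
  rw [sec_spec] at e0
  rw [hgf, e0]
  exact Finset.le_sup (f := fun q : Q => Γ.dist q.out (sec G b₂ • b₁)) (Finset.mem_univ (Quotient.mk'' v : Q))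

end Group

end EndsInv

open EndsInv in
/-- If a group `G` acts cocompactly by covering (deck) transformations — i.e.
freely, by automorphisms, with finitely many orbits — on two connected locally
finite graphs (the `1`-skeleta of simplicial complexes), then the two graphs have
the same number of topological ends: the number of ends depends only on `G`. -/
theorem stmt_15 (G : Type*) [Group G]
    (V₁ V₂ : Type*) (Γ₁ : SimpleGraph V₁) (Γ₂ : SimpleGraph V₂)
    [MulAction G V₁] [MulAction G V₂]
    (hconn₁ : Γ₁.Connected) (hconn₂ : Γ₂.Connected)
    (hlf₁ : Γ₁.LocallyFinite) (hlf₂ : Γ₂.LocallyFinite)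
    (haut₁ : ∀ (g : G) (x y : V₁), Γ₁.Adj x y → Γ₁.Adj (g • x) (g • y))
    (haut₂ : ∀ (g : G) (x y : V₂), Γ₂.Adj x y → Γ₂.Adj (g • x) (g • y))
    (hfree₁ : ∀ (g : G) (x : V₁), g • x = x → g = 1)
    (hfree₂ : ∀ (g : G) (x : V₂), g • x = x → g = 1)
    (hcocompact₁ : Finite (MulAction.orbitRel.Quotient G V₁))
    (hcocompact₂ : Finite (MulAction.orbitRel.Quotient G V₂)) :
    Nat.card Γ₁.end = Nat.card Γ₂.end := by
  haveI := hcocompact₁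
  haveI := hcocompact₂
  have hne₁ : Nonempty V₁ := hconn₁.nonempty
  have hne₂ : Nonempty V₂ := hconn₂.nonempty
  obtain ⟨b₁⟩ := hne₁
  obtain ⟨b₂⟩ := hne₂
  obtain ⟨C, hC⟩ := gmap_lip Γ₁ Γ₂ hconn₂ hlf₁ haut₁ haut₂ hfree₁ b₂
  have hpropf := gmap_prop (V := V₁) hfree₂ b₂
  obtain ⟨C', hC'⟩ := gmap_lip Γ₂ Γ₁ hconn₁ hlf₂ haut₂ haut₁ hfree₂ b₁
  have hpropg := gmap_prop (V := V₂) hfree₁ b₁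
  obtain ⟨D, hD⟩ := gmap_disp Γ₁ hconn₁ haut₁ hfree₂ b₁ b₂
  obtain ⟨D', hD'⟩ := gmap_disp Γ₂ hconn₂ haut₂ hfree₁ b₂ b₁
  have left := endMap_comp hconn₁ hlf₁ hconn₂ hlf₂ hC hpropf hC' hpropg hD
  have right := endMap_comp hconn₂ hlf₂ hconn₁ hlf₁ hC' hpropg hC hpropf hD'
  exact Nat.card_eq_of_bijective (endMap hconn₂ hlf₂ hC hpropf)
    (Function.bijective_iff_has_inverse.mpr
      ⟨endMap hconn₁ hlf₁ hC' hpropg, left, right⟩)
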